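/- Let S = k[x_0, ..., x_n] be a Z-graded polynomial ring with deg(x_i) = d_i positive integers, and let M be a finitely generated graded S-module with M_0 ≠ 0 and M_i = 0 for all i < 0. If the graded Betti number β_{i,j}(M) = dim_k Tor_i^S(M,k)_j is nonzero, then j ≥ w_i, where w_i is the sum of the i smallest degrees among d_0, ..., d_n. -/

import Mathlib

open MvPolynomial

/-- A minimal graded free resolution of a graded module `M` over the weighted
polynomial ring `S = k[x_0, ..., x_n]` with `deg x_t = d t`.  The `i`-th free module
`F_i` has basis `B i`, with the basis element `b` a generator of degree `deg i b`
(so `F_i = ⊕_b S(-deg i b)`).  The graded Betti number `β_{i,j}(M)` is the number of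
`b : B i` with `deg i b = j`. -/
structure GradedFreeRes (k : Type) [Field k] (n : ℕ) (d : Fin (n + 1) → ℕ)
    (M : Type) [AddCommGroup M] [Module (MvPolynomial (Fin (n + 1)) k) M]
    [Module k M] (𝒜 : ℤ → Submodule k M) where
  B : ℕ → Type
  deg : ∀ i, B i → ℤ
  D : ∀ i, (B (i + 1) →₀ MvPolynomial (Fin (n + 1)) k) →ₗ[MvPolynomial (Fin (n + 1)) k]
      (B i →₀ MvPolynomial (Fin (n + 1)) k)
  aug : (B 0 →₀ MvPolynomial (Fin (n + 1)) k) →ₗ[MvPolynomial (Fin (n + 1)) k] M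
  aug_surj : Function.Surjective aug
  /-- the augmentation is degree-preserving -/
  aug_hom : ∀ b : B 0, aug (Finsupp.single b 1) ∈ 𝒜 (deg 0 b)
  exact_zero : Function.Exact (D 0) aug
  exact_succ : ∀ i, Function.Exact (D (i + 1)) (D i)
  /-- minimality: all matrix entries of the differentials lie in the maximal ideal -/
  minimal : ∀ (i) (b : B (i + 1)) (b' : B i), constantCoeff (D i (Finsupp.single b 1) b') = 0
  /-- the differentials are homogeneous for the weighted grading -/
  homog : ∀ (i) (b : B (i + 1)) (b' : B i),
    D i (Finsupp.single b 1) b' ∈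
      weightedHomogeneousSubmodule k (fun t => (d t : ℤ)) (deg (i + 1) b - deg i b')

namespace Stmt1Aux

noncomputable section

open Finset

variable {k : Type} [Field k] {n : ℕ}

/-- The Koszul exterior-module: coefficient of the basis element `e_T` for each
finset `T` of variables. -/
abbrev K (k : Type) [Field k] (n : ℕ) := Finset (Fin (n + 1)) → MvPolynomial (Fin (n + 1)) k

def sgn (t : Fin (n + 1)) (T : Finset (Fin (n + 1))) : MvPolynomial (Fin (n + 1)) k :=
  (-1) ^ (T.filter (fun s => s < t)).card

lemma sgn_eq (t : Fin (n + 1)) (T : Finset (Fin (n + 1))) :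
    (sgn t T : MvPolynomial (Fin (n + 1)) k) = C ((-1 : k) ^ (T.filter (fun s => s < t)).card) := by
  rw [sgn, map_pow, map_neg, map_one]

/-- The Koszul differential. -/
def kos : K k n →ₗ[MvPolynomial (Fin (n + 1)) k] K k n where
  toFun ω T := ∑ t ∈ Tᶜ, sgn t T * (X t * ω (insert t T))
  map_add' ω ω' := by
    funext T
    simp [Pi.add_apply, mul_add, Finset.sum_add_distrib]
  map_smul' c ω := by
    funext T
    simp only [Pi.smul_apply, smul_eq_mul, RingHom.id_apply, Finset.mul_sum]
    exact Finset.sum_congr rfl fun t _ => by ring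

lemma kos_apply (ω : K k n) (T : Finset (Fin (n + 1))) :
    kos ω T = ∑ t ∈ Tᶜ, sgn t T * (X t * ω (insert t T)) := rfl

def pcond (u : Fin (n + 1)) (ν : Fin (n + 1) →₀ ℕ) : Prop :=
  ν u ≠ 0 ∧ ∀ t, t < u → ν t = 0

instance (u : Fin (n + 1)) (ν : Fin (n + 1) →₀ ℕ) : Decidable (pcond u ν) := by
  unfold pcond; infer_instance

lemma pcond_unique {u v : Fin (n + 1)} {ν : Fin (n + 1) →₀ ℕ}
    (hu : pcond u ν) (hv : pcond v ν) : u = v := by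
  rcases lt_trichotomy u v with h | h | h
  · exact absurd (hv.2 u h) hu.1
  · exact h
  · exact absurd (hu.2 v h) hv.1

def pdiv (u : Fin (n + 1)) (p : MvPolynomial (Fin (n + 1)) k) : MvPolynomial (Fin (n + 1)) k :=
  (AddMonoidAlgebra.coeff p).sum fun ν c => if pcond u ν then monomial (ν - Finsupp.single u 1) c else 0

lemma pdiv_zero (u : Fin (n + 1)) : pdiv u (0 : MvPolynomial (Fin (n + 1)) k) = 0 :=
  Finsupp.sum_zero_index

lemma pdiv_monomial (u : Fin (n + 1)) (ν : Fin (n + 1) →₀ ℕ) (c : k) :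
    pdiv u (monomial ν c) =
      if pcond u ν then monomial (ν - Finsupp.single u 1) c else 0 := by
  rw [pdiv, sum_monomial_eq]
  split <;> simp

lemma pdiv_add (u : Fin (n + 1)) (p q : MvPolynomial (Fin (n + 1)) k) :
    pdiv u (p + q) = pdiv u p + pdiv u q := by
  rw [pdiv, pdiv, pdiv, AddMonoidAlgebra.coeff_add]
  apply Finsupp.sum_add_index
  · intro ν _; split <;> simp
  · intro ν _ c₁ c₂; split <;> simp

/-- The contracting homotopy of the Koszul complex. -/
def hs (ω : K k n) : K k n := fun T =>
  if h : T.Nonempty then pdiv (T.min' h) (ω (T.erase (T.min' h))) else 0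

lemma hs_zero : hs (0 : K k n) = 0 := by
  funext T
  rw [hs]
  split <;> simp [pdiv_zero]

lemma hs_add (ω ω' : K k n) : hs (ω + ω') = hs ω + hs ω' := by
  funext T
  rw [hs]
  by_cases h : T.Nonempty
  · simp only [hs, dif_pos h, Pi.add_apply, pdiv_add]
  · simp [hs, dif_neg h]

/-- projection onto the degree-(0,0) part -/
def pr0 (ω : K k n) : K k n := fun T =>
  if T = ∅ then C (constantCoeff (ω ∅)) else 0

lemma pr0_zero : pr0 (0 : K k n) = 0 := by
  funext T; rw [pr0]; split <;> simp

lemma pr0_add (ω ω' : K k n) : pr0 (ω + ω') = pr0 ω + pr0 ω' := by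
  funext T; rw [pr0]
  by_cases h : T = ∅ <;> simp [pr0, h]


lemma kos_single (T₀ : Finset (Fin (n + 1))) (p : MvPolynomial (Fin (n + 1)) k) :
    kos (Pi.single T₀ p) =
      ∑ t ∈ T₀, Pi.single (T₀.erase t) (sgn t (T₀.erase t) * (X t * p)) := by
  funext T
  rw [kos_apply, Finset.sum_apply]
  have hL : ∀ t : Fin (n + 1),
      t ∈ Tᶜ → (sgn t T : MvPolynomial (Fin (n + 1)) k) * ((X t : MvPolynomial (Fin (n + 1)) k) * (Pi.single T₀ p : K k n) (insert t T)) =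
        if t ∈ T₀ ∧ T = T₀.erase t then (sgn t T : MvPolynomial (Fin (n + 1)) k) * (X t * p) else 0 := by
    intro t ht
    have htT : t ∉ T := by simpa using ht
    rw [Pi.single_apply]
    by_cases h3 : insert t T = T₀
    · have h2 : t ∈ T₀ := h3 ▸ mem_insert_self t T
      have hT : T = T₀.erase t := by rw [← h3, Finset.erase_insert htT]
      rw [if_pos h3, if_pos ⟨h2, hT⟩]
    · rw [if_neg h3, mul_zero, mul_zero, if_neg]
      rintro ⟨h2, hT⟩
      exact h3 (by rw [hT, Finset.insert_erase h2])
  rw [Finset.sum_congr rfl hL]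
  have hR : ∀ t ∈ T₀, (Pi.single (T₀.erase t) ((sgn t (T₀.erase t) : MvPolynomial (Fin (n + 1)) k) * (X t * p)) : K k n) T =
      if t ∈ T₀ ∧ T = T₀.erase t then (sgn t T : MvPolynomial (Fin (n + 1)) k) * (X t * p) else 0 := by
    intro t ht
    rw [Pi.single_apply]
    by_cases hT : T = T₀.erase t
    · rw [if_pos hT, if_pos ⟨ht, hT⟩, hT]
    · rw [if_neg hT, if_neg (by tauto)]
  rw [Finset.sum_congr rfl hR]
  rw [← Finset.sum_filter, ← Finset.sum_filter]
  apply Finset.sum_congr _ (fun _ _ => rfl)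
  ext t
  simp only [Finset.mem_filter, Finset.mem_compl]
  constructor
  · rintro ⟨_, h⟩; exact ⟨h.1, h⟩
  · rintro ⟨ht, h⟩
    refine ⟨?_, h⟩
    rw [h.2]; exact Finset.notMem_erase t T₀

lemma hs_single_pos (A : Finset (Fin (n + 1))) (ν : Fin (n + 1) →₀ ℕ) (c : k)
    (v : Fin (n + 1)) (hv : pcond v ν) (hA : ∀ a ∈ A, v < a) :
    hs (Pi.single A (monomial ν c)) =
      Pi.single (insert v A) (monomial (ν - Finsupp.single v 1) c) := by
  funext T
  rw [hs, Pi.single_apply]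
  by_cases hT : T = insert v A
  · have hvA : v ∉ A := fun h => lt_irrefl v (hA v h)
    subst hT
    have hne : (insert v A).Nonempty := insert_nonempty _ _
    rw [dif_pos hne, if_pos rfl]
    have hmin : (insert v A).min' hne = v := by
      refine le_antisymm (Finset.min'_le _ _ (mem_insert_self _ _)) (Finset.le_min' _ _ _ ?_)
      intro y hy
      rcases Finset.mem_insert.mp hy with rfl | hy
      · exact le_refl _
      · exact (hA y hy).le
    rw [hmin, Finset.erase_insert hvA, Pi.single_eq_same, pdiv_monomial, if_pos hv]
  · rw [if_neg hT]
    by_cases hne : T.Nonempty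
    · rw [dif_pos hne]
      set u := T.min' hne with hu
      by_cases hTA : T.erase u = A
      · have huT : u ∈ T := Finset.min'_mem _ _
        rw [hTA, Pi.single_eq_same, pdiv_monomial, if_neg]
        intro hpc
        have huv : u = v := pcond_unique hpc hv
        exact hT (by rw [← hTA, ← huv, Finset.insert_erase huT])
      · rw [Pi.single_eq_of_ne hTA, pdiv_zero]
    · rw [dif_neg hne]

lemma hs_single_zero (A : Finset (Fin (n + 1))) (ν : Fin (n + 1) →₀ ℕ) (c : k)
    (h : ∀ v, pcond v ν → v ∈ A ∨ ¬(∀ a ∈ A, v ≤ a)) :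
    hs (Pi.single A (monomial ν c)) = 0 := by
  funext T
  rw [hs]
  by_cases hne : T.Nonempty
  · rw [dif_pos hne]
    set u := T.min' hne with hu
    by_cases hTA : T.erase u = A
    · rw [hTA, Pi.single_eq_same, pdiv_monomial, if_neg, Pi.zero_apply]
      intro hpc
      rcases h u hpc with hin | hnot
      · exact Finset.notMem_erase u T (hTA ▸ hin)
      · refine hnot fun a ha => ?_
        rw [← hTA] at ha
        exact T.min'_le a (Finset.mem_of_mem_erase ha)
    · rw [Pi.single_eq_of_ne hTA, pdiv_zero, Pi.zero_apply]
  · rw [dif_neg hne, Pi.zero_apply]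


lemma X_mul_monomial' (t : Fin (n + 1)) (ν : Fin (n + 1) →₀ ℕ) (c : k) :
    (X t : MvPolynomial (Fin (n + 1)) k) * monomial ν c
      = monomial (ν + Finsupp.single t 1) c := by
  rw [X, monomial_mul, one_mul, add_comm (Finsupp.single t 1) ν]

lemma sgn_mul_monomial (t : Fin (n + 1)) (T : Finset (Fin (n + 1))) (ν : Fin (n + 1) →₀ ℕ)
    (c : k) :
    (sgn t T : MvPolynomial (Fin (n + 1)) k) * monomial ν c
      = monomial ν ((-1 : k) ^ (T.filter (fun s => s < t)).card * c) := by
  rw [sgn_eq, C_mul_monomial]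

lemma kos_single_monomial (T₀ : Finset (Fin (n + 1))) (ν : Fin (n + 1) →₀ ℕ) (c : k) :
    kos (Pi.single T₀ (monomial ν c)) = ∑ t ∈ T₀, Pi.single (T₀.erase t)
      (monomial (ν + Finsupp.single t 1)
        ((-1 : k) ^ ((T₀.erase t).filter (fun s => s < t)).card * c)) := by
  rw [kos_single]
  refine Finset.sum_congr rfl fun t _ => ?_
  rw [X_mul_monomial', sgn_mul_monomial]

lemma hs_sum {ι : Type} (s : Finset ι) (f : ι → K k n) :
    hs (∑ i ∈ s, f i) = ∑ i ∈ s, hs (f i) := by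
  classical
  induction s using Finset.induction_on with
  | empty => simp [hs_zero]
  | @insert a s h ih => rw [Finset.sum_insert h, hs_add, ih, Finset.sum_insert h]

lemma homotopy_single (T₀ : Finset (Fin (n + 1))) (ν : Fin (n + 1) →₀ ℕ) (c : k) :
    kos (hs (Pi.single T₀ (monomial ν c))) + hs (kos (Pi.single T₀ (monomial ν c)))
      + pr0 (Pi.single T₀ (monomial ν c)) = Pi.single T₀ (monomial ν c) := by
  set ω : K k n := Pi.single T₀ (monomial ν c) with hω
  by_cases hμ : ν.support ∪ T₀ = ∅
  · have hT₀ : T₀ = ∅ := (Finset.union_eq_empty.mp hμ).2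
    have hν : ν = 0 := Finsupp.support_eq_empty.mp (Finset.union_eq_empty.mp hμ).1
    have h1 : hs ω = 0 := hs_single_zero _ _ _ (fun v hv => absurd (by simp [hν]) hv.1)
    have h2 : kos ω = 0 := by rw [hω, kos_single, hT₀, Finset.sum_empty]
    rw [h1, h2, hs_zero, map_zero, add_zero, zero_add]
    funext T
    rw [pr0]
    by_cases hT : T = ∅
    · subst hT
      rw [if_pos rfl, hω, hT₀, hν, Pi.single_eq_same, constantCoeff_monomial, if_pos rfl,
        C_apply]
    · rw [if_neg hT, hω, hT₀, Pi.single_eq_of_ne hT]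
  · have hμne : (ν.support ∪ T₀).Nonempty := Finset.nonempty_iff_ne_empty.mpr hμ
    set u := (ν.support ∪ T₀).min' hμne with hu
    have hsup : ∀ t ∈ ν.support, u ≤ t :=
      fun t ht => Finset.min'_le _ _ (Finset.mem_union_left _ ht)
    have hsup' : ∀ t, t < u → ν t = 0 := fun t ht => by
      by_contra h
      exact absurd (hsup t (Finsupp.mem_support_iff.mpr h)) (not_le.mpr ht)
    have hT₀le : ∀ t ∈ T₀, u ≤ t :=
      fun t ht => Finset.min'_le _ _ (Finset.mem_union_right _ ht)
    have hpr : pr0 ω = 0 := by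
      funext T
      rw [pr0]
      by_cases hT : T = ∅
      · rw [if_pos hT]
        by_cases hT₀ : T₀ = ∅
        · have hν : ν ≠ 0 := fun h => hμ (by rw [h, hT₀]; simp)
          rw [hω, hT₀, Pi.single_eq_same, constantCoeff_monomial, if_neg hν, map_zero,
            Pi.zero_apply]
        · rw [hω, Pi.single_eq_of_ne (fun h => hT₀ (h.symm : T₀ = ∅)), map_zero, map_zero,
            Pi.zero_apply]
      · rw [if_neg hT, Pi.zero_apply]
    by_cases huT : u ∈ T₀
    · -- case B : the minimum is an exterior index
      have h1 : hs ω = 0 := by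
        apply hs_single_zero
        intro v hv
        by_cases hvA : v ∈ T₀
        · exact Or.inl hvA
        · refine Or.inr fun hall => ?_
          have h2 : v ≤ u := hall u huT
          have h3 : u ≤ v := hsup v (Finsupp.mem_support_iff.mpr hv.1)
          exact hvA (le_antisymm h2 h3 ▸ huT)
      have h2 : hs (kos ω) = ω := by
        rw [hω, kos_single_monomial, hs_sum]
        have hterm : ∀ t ∈ T₀,
            hs (Pi.single (T₀.erase t) (monomial (ν + Finsupp.single t 1)
              ((-1 : k) ^ ((T₀.erase t).filter (fun s => s < t)).card * c)))
            = if t = u then ω else 0 := by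
          intro t ht
          by_cases htu : t = u
          · subst htu
            rw [if_pos rfl]
            rw [hs_single_pos _ _ _ u ⟨by simp, fun s hs' => by
                rw [Finsupp.add_apply, hsup' s hs', Finsupp.single_apply,
                  if_neg (ne_of_gt hs'), add_zero]⟩
              (fun a ha => by
                rcases Finset.mem_erase.mp ha with ⟨hne, haT₀⟩
                exact lt_of_le_of_ne (hT₀le a haT₀) (Ne.symm hne))]
            have e1 : (ν + Finsupp.single u 1) - Finsupp.single u 1 = ν :=
              add_tsub_cancel_right ν (Finsupp.single u 1)
            have e2 : insert u (T₀.erase u) = T₀ := Finset.insert_erase ht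
            have e3 : ((T₀.erase u).filter (fun s => s < u)).card = 0 := by
              rw [Finset.card_eq_zero, Finset.filter_eq_empty_iff]
              intro a ha
              exact not_lt.mpr (hT₀le a (Finset.mem_of_mem_erase ha))
            rw [e1, e2, e3, pow_zero, one_mul, hω]
          · rw [if_neg htu]
            apply hs_single_zero
            intro v hv
            have huA : u ∈ T₀.erase t :=
              Finset.mem_erase.mpr ⟨fun h => htu h.symm, huT⟩
            by_cases hvA : v ∈ T₀.erase t
            · exact Or.inl hvA
            · refine Or.inr fun hall => ?_
              have h2 : v ≤ u := hall u huA
              have h3 : u ≤ v := by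
                by_cases hν : ν v = 0
                · have hvt : v = t := by
                    by_contra hvt
                    apply hv.1
                    rw [Finsupp.add_apply, hν, Finsupp.single_apply,
                      if_neg (fun h => hvt h.symm), add_zero]
                  exact hvt ▸ hT₀le t ht
                · exact hsup v (Finsupp.mem_support_iff.mpr hν)
              exact hvA (le_antisymm h2 h3 ▸ huA)
        rw [Finset.sum_congr rfl hterm, Finset.sum_ite_eq' T₀ u (fun _ => ω), if_pos huT]
      rw [h1, map_zero, zero_add, h2, hpr, add_zero]
    · -- case C : the minimum is a polynomial index
      have huS : u ∈ ν.support := by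
        rcases Finset.mem_union.mp ((ν.support ∪ T₀).min'_mem hμne) with h | h
        · exact h
        · exact absurd h huT
      have hνu : ν u ≠ 0 := Finsupp.mem_support_iff.mp huS
      have hpc : pcond u ν := ⟨hνu, hsup'⟩
      have hT₀lt : ∀ a ∈ T₀, u < a :=
        fun a ha => lt_of_le_of_ne (hT₀le a ha) (fun h => huT (h ▸ ha))
      have hsle : Finsupp.single u 1 ≤ ν :=
        Finsupp.single_le_iff.mpr (Nat.one_le_iff_ne_zero.mpr hνu)
      have h1 : hs ω = Pi.single (insert u T₀) (monomial (ν - Finsupp.single u 1) c) := by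
        rw [hω]; exact hs_single_pos _ _ _ u hpc hT₀lt
      -- kos (hs ω)
      have h2 : kos (hs ω) = ω + ∑ t ∈ T₀, Pi.single (insert u (T₀.erase t))
          (monomial ((ν - Finsupp.single u 1) + Finsupp.single t 1)
            (-((-1 : k) ^ ((T₀.erase t).filter (fun s => s < t)).card * c))) := by
        rw [h1, kos_single_monomial, Finset.sum_insert huT]
        congr 1
        · -- the t = u term is ω
          rw [Finset.erase_insert huT, tsub_add_cancel_of_le hsle]
          have e3 : (T₀.filter (fun s => s < u)).card = 0 := by
            rw [Finset.card_eq_zero, Finset.filter_eq_empty_iff]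
            intro a ha
            exact not_lt.mpr (hT₀le a ha)
          rw [e3, pow_zero, one_mul, hω]
        · refine Finset.sum_congr rfl fun t ht => ?_
          have hut : u ≠ t := (hT₀lt t ht).ne
          have e4 : (insert u T₀).erase t = insert u (T₀.erase t) :=
            Finset.erase_insert_of_ne hut
          have hunotin : u ∉ (T₀.erase t).filter (fun s => s < t) :=
            fun h => huT (Finset.mem_of_mem_erase (Finset.mem_filter.mp h).1)
          have e5 : ((insert u (T₀.erase t)).filter (fun s => s < t)).card
              = ((T₀.erase t).filter (fun s => s < t)).card + 1 := by
            rw [Finset.filter_insert, if_pos (hT₀lt t ht),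
              Finset.card_insert_of_notMem hunotin]
          have e6 : ((-1 : k) ^ (((T₀.erase t).filter (fun s => s < t)).card + 1) * c)
              = -((-1 : k) ^ ((T₀.erase t).filter (fun s => s < t)).card * c) := by ring
          rw [e4, e5, e6]
      -- hs (kos ω)
      have h3 : hs (kos ω) = ∑ t ∈ T₀, Pi.single (insert u (T₀.erase t))
          (monomial ((ν - Finsupp.single u 1) + Finsupp.single t 1)
            ((-1 : k) ^ ((T₀.erase t).filter (fun s => s < t)).card * c)) := by
        rw [hω, kos_single_monomial, hs_sum]
        refine Finset.sum_congr rfl fun t ht => ?_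
        have hut : u ≠ t := (hT₀lt t ht).ne
        rw [hs_single_pos _ _ _ u ⟨by
              rw [Finsupp.add_apply]
              intro h
              exact hνu (by omega), fun s hs' => by
              rw [Finsupp.add_apply, hsup' s hs', Finsupp.single_apply,
                if_neg (fun (h : t = s) => lt_asymm hs' (h ▸ hT₀lt t ht)),
                add_zero]⟩
            (fun a ha => hT₀lt a (Finset.mem_of_mem_erase ha))]
        rw [tsub_add_eq_add_tsub hsle]
      rw [h2, h3, hpr, add_zero, add_assoc, ← Finset.sum_add_distrib]
      have hzero : ∀ t ∈ T₀, (Pi.single (insert u (T₀.erase t))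
          (monomial ((ν - Finsupp.single u 1) + Finsupp.single t 1)
            (-((-1 : k) ^ ((T₀.erase t).filter (fun s => s < t)).card * c))) : K k n)
          + Pi.single (insert u (T₀.erase t))
          (monomial ((ν - Finsupp.single u 1) + Finsupp.single t 1)
            ((-1 : k) ^ ((T₀.erase t).filter (fun s => s < t)).card * c)) = 0 := by
        intro t _
        rw [← Pi.single_add, ← map_add, neg_add_cancel, map_zero, Pi.single_zero]
      rw [Finset.sum_congr rfl hzero, Finset.sum_const_zero, add_zero]

lemma homotopy (ω : K k n) : kos (hs ω) + hs (kos ω) + pr0 ω = ω := by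
  have Padd : ∀ ω₁ ω₂ : K k n,
      kos (hs ω₁) + hs (kos ω₁) + pr0 ω₁ = ω₁ →
      kos (hs ω₂) + hs (kos ω₂) + pr0 ω₂ = ω₂ →
      kos (hs (ω₁ + ω₂)) + hs (kos (ω₁ + ω₂)) + pr0 (ω₁ + ω₂) = ω₁ + ω₂ := by
    intro ω₁ ω₂ h1 h2
    rw [hs_add, map_add, map_add, hs_add, pr0_add]
    calc kos (hs ω₁) + kos (hs ω₂) + (hs (kos ω₁) + hs (kos ω₂)) + (pr0 ω₁ + pr0 ω₂)
        = (kos (hs ω₁) + hs (kos ω₁) + pr0 ω₁) + (kos (hs ω₂) + hs (kos ω₂) + pr0 ω₂) := by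
          abel
      _ = ω₁ + ω₂ := by rw [h1, h2]
  have Psingle : ∀ (T₀ : Finset (Fin (n + 1))) (p : MvPolynomial (Fin (n + 1)) k),
      kos (hs (Pi.single T₀ p)) + hs (kos (Pi.single T₀ p)) + pr0 (Pi.single T₀ p)
        = Pi.single T₀ p := by
    intro T₀ p
    induction p using MvPolynomial.induction_on' with
    | monomial ν c => exact homotopy_single T₀ ν c
    | add p q hp hq => rw [Pi.single_add]; exact Padd _ _ hp hq
  have hdec : ω = ∑ T ∈ Finset.univ, Pi.single T (ω T) := by
    rw [Finset.univ_sum_single]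
  rw [hdec]
  exact Finset.sum_induction _ (fun w => kos (hs w) + hs (kos w) + pr0 w = w) Padd
    (by show kos (hs (0 : K k n)) + hs (kos 0) + pr0 0 = 0
        simp [hs_zero, pr0_zero])
    (fun T _ => Psingle T (ω T))

lemma sgn_antisym {t t' : Fin (n + 1)} (T : Finset (Fin (n + 1))) (hne : t' ≠ t)
    (ht : t ∉ T) (ht' : t' ∉ T) :
    (sgn t T : MvPolynomial (Fin (n + 1)) k) * sgn t' (insert t T)
      = -(sgn t' T * sgn t (insert t' T)) := by
  have key : ∀ a b : Fin (n + 1), b < a → b ∉ T →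
      ((sgn a (insert b T) : MvPolynomial (Fin (n + 1)) k) = -sgn a T) ∧
      ((sgn b (insert a T) : MvPolynomial (Fin (n + 1)) k) = sgn b T) := by
    intro a b hba hbT
    constructor
    · rw [sgn, sgn, Finset.filter_insert, if_pos hba, Finset.card_insert_of_notMem
        (fun h => hbT (Finset.mem_filter.mp h).1), pow_succ]
      ring
    · rw [sgn, sgn, Finset.filter_insert, if_neg (not_lt.mpr hba.le)]
  rcases hne.lt_or_gt with h | h
  · rcases key t t' h ht' with ⟨h1, h2⟩
    rw [h1, h2]
    ring
  · rcases key t' t h ht with ⟨h1, h2⟩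
    rw [h1, h2]
    ring

lemma kos_kos (ω : K k n) : kos (kos ω) = 0 := by
  funext T
  rw [kos_apply, Pi.zero_apply]
  have h1 : ∀ t ∈ Tᶜ, (sgn t T : MvPolynomial (Fin (n + 1)) k) * (X t * kos ω (insert t T))
      = ∑ t' ∈ Tᶜ, (if t' ≠ t then (sgn t T * sgn t' (insert t T)) *
          ((X t * X t') * ω (insert t' (insert t T))) else 0) := by
    intro t ht
    calc (sgn t T : MvPolynomial (Fin (n + 1)) k) * (X t * kos ω (insert t T))
        = ∑ t' ∈ (insert t T)ᶜ, (sgn t T * sgn t' (insert t T)) *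
            ((X t * X t') * ω (insert t' (insert t T))) := by
          rw [kos_apply, Finset.mul_sum, Finset.mul_sum]
          exact Finset.sum_congr rfl fun t' _ => by ring
      _ = _ := by
          rw [Finset.compl_insert, ← Finset.filter_ne', Finset.sum_filter]
  rw [Finset.sum_congr rfl h1, ← Finset.sum_product']
  apply Finset.sum_involution (fun p _ => (p.2, p.1))
  · intro p hp
    rcases Finset.mem_product.mp hp with ⟨hp1, hp2⟩
    by_cases hd : p.2 = p.1
    · rw [if_neg (fun h => h hd), if_neg (fun h => h hd.symm), add_zero]
    · rw [if_pos hd, if_pos (Ne.symm hd)]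
      rw [sgn_antisym T hd (Finset.mem_compl.mp hp1) (Finset.mem_compl.mp hp2),
        Finset.insert_comm, mul_comm (X p.1) (X p.2)]
      ring
  · intro p hp hF heq
    apply hF
    have h2 : p.2 = p.1 := (Prod.mk.injEq _ _ _ _ ▸ heq).1
    rw [if_neg (fun h => h h2)]
  · intro p hp
    rcases Finset.mem_product.mp hp with ⟨hp1, hp2⟩
    exact Finset.mem_product.mpr ⟨hp2, hp1⟩
  · intro p hp
    rfl

def wtT (d : Fin (n + 1) → ℕ) (T : Finset (Fin (n + 1))) : ℤ := ∑ t ∈ T, (d t : ℤ)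

variable (d : Fin (n + 1) → ℕ)

lemma wtT_insert {t : Fin (n + 1)} {T : Finset (Fin (n + 1))} (h : t ∉ T) :
    wtT d (insert t T) = (d t : ℤ) + wtT d T := Finset.sum_insert h

lemma wtT_erase {t : Fin (n + 1)} {T : Finset (Fin (n + 1))} (h : t ∈ T) :
    wtT d T = (d t : ℤ) + wtT d (T.erase t) := by
  rw [wtT, wtT, ← Finset.add_sum_erase _ _ h]

lemma weight_single (u : Fin (n + 1)) :
    Finsupp.weight (fun t => (d t : ℤ)) (Finsupp.single u 1) = (d u : ℤ) := by
  rw [Finsupp.weight_apply, Finsupp.sum_single_index] <;> simp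

lemma pdiv_homog (u : Fin (n + 1)) (δ : ℤ) (p : MvPolynomial (Fin (n + 1)) k)
    (hp : p ∈ weightedHomogeneousSubmodule k (fun t => (d t : ℤ)) δ) :
    pdiv u p ∈ weightedHomogeneousSubmodule k (fun t => (d t : ℤ)) (δ - (d u : ℤ)) := by
  rw [pdiv, sum_def]
  apply Submodule.sum_mem
  intro ν hν
  split_ifs with hc
  · rw [mem_weightedHomogeneousSubmodule]
    apply isWeightedHomogeneous_monomial
    have h1 : Finsupp.weight (fun t => (d t : ℤ)) ν = δ :=
      (mem_weightedHomogeneousSubmodule _ _ _ _).mp hp (MvPolynomial.mem_support_iff.mp hν)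
    have h2 : (ν - Finsupp.single u 1) + Finsupp.single u 1 = ν :=
      tsub_add_cancel_of_le (Finsupp.single_le_iff.mpr (Nat.one_le_iff_ne_zero.mpr hc.1))
    have h3 := weight_single d u
    have h4 := congrArg (Finsupp.weight (fun t => (d t : ℤ))) h2
    rw [map_add, h3, h1] at h4
    omega
  · exact Submodule.zero_mem _

/-- homogeneity of total internal degree `e` for an element of the Koszul module -/
def KHomog (e : ℤ) (ω : K k n) : Prop :=
  ∀ T, ω T ∈ weightedHomogeneousSubmodule k (fun t => (d t : ℤ)) (e - wtT d T)

lemma kos_homog {e : ℤ} {ω : K k n} (h : KHomog d e ω) : KHomog d e (kos ω) := by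
  intro T
  rw [kos_apply]
  apply Submodule.sum_mem
  intro t ht
  rw [sgn_eq, C_mul']
  apply Submodule.smul_mem
  have h1 := h (insert t T)
  rw [mem_weightedHomogeneousSubmodule] at h1 ⊢
  have h2 := (isWeightedHomogeneous_X k (fun t => (d t : ℤ)) t).mul h1
  have heq : (d t : ℤ) + (e - wtT d (insert t T)) = e - wtT d T := by
    rw [wtT_insert d (Finset.mem_compl.mp ht)]; ring
  rwa [heq] at h2

lemma hs_homog {e : ℤ} {ω : K k n} (h : KHomog d e ω) : KHomog d e (hs ω) := by
  intro T
  rw [hs]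
  by_cases hne : T.Nonempty
  · rw [dif_pos hne]
    have h2 := pdiv_homog d (T.min' hne) _ _ (h (T.erase (T.min' hne)))
    have heq : e - wtT d (T.erase (T.min' hne)) - (d (T.min' hne) : ℤ) = e - wtT d T := by
      rw [wtT_erase d (T.min'_mem hne)]; ring
    rwa [heq] at h2
  · rw [dif_neg hne]
    exact Submodule.zero_mem _

/-- concentrated in exterior degree `q` -/
def KSlots (q : ℕ) (ω : K k n) : Prop :=
  ∀ T : Finset (Fin (n + 1)), T.card ≠ q → ω T = 0

lemma hs_slots {q : ℕ} {ω : K k n} (h : KSlots q ω) : KSlots (q + 1) (hs ω) := by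
  intro T hT
  rw [hs]
  by_cases hne : T.Nonempty
  · rw [dif_pos hne]
    have hcard : (T.erase (T.min' hne)).card ≠ q := by
      rw [Finset.card_erase_of_mem (T.min'_mem hne)]
      have : 1 ≤ T.card := Finset.card_pos.mpr hne
      omega
    rw [h _ hcard, pdiv_zero]
  · rw [dif_neg hne]

lemma kos_slots_empty {ω : K k n} (h : ∀ T, T ≠ ∅ → ω T = 0) : kos ω = 0 := by
  funext T
  rw [kos_apply, Pi.zero_apply]
  apply Finset.sum_eq_zero
  intro t _
  rw [h _ (Finset.insert_ne_empty t T), mul_zero, mul_zero]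

def Wlow (d : Fin (n + 1) → ℕ) (q : ℕ) : ℤ :=
  ∑ t ∈ Finset.univ.filter (fun t : Fin (n + 1) => (t : ℕ) < q), (d t : ℤ)

lemma Wlow_le_wtT (hmono : Monotone d) {T : Finset (Fin (n + 1))} {q : ℕ}
    (hc : T.card = q) : Wlow d q ≤ wtT d T := by
  have hq : q ≤ n + 1 := by
    rw [← hc]
    simpa using Finset.card_le_univ T
  set f := T.orderEmbOfFin hc with hf
  have key : ∀ j : Fin q, (j : ℕ) ≤ (f j : ℕ) := by
    have : ∀ m : ℕ, ∀ j : Fin q, (j : ℕ) = m → m ≤ (f j : ℕ) := by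
      intro m
      induction m with
      | zero => intro j _; exact Nat.zero_le _
      | succ m ih =>
        intro j hj
        have hm : m < q := by omega
        have hlt : (⟨m, hm⟩ : Fin q) < j := by
          rw [Fin.lt_def]; simpa using by omega
        have h1 := f.strictMono hlt
        have h2 := ih ⟨m, hm⟩ rfl
        rw [Fin.lt_def] at h1
        omega
    exact fun j => this _ j rfl
  have hT : T = Finset.univ.image f := by
    ext x
    simp only [Finset.mem_image, Finset.mem_univ, true_and]
    constructor
    · intro hx
      have h := Finset.range_orderEmbOfFin T hc
      have : x ∈ Set.range f := by rw [h]; exact hx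
      exact this
    · rintro ⟨j, rfl⟩
      exact Finset.orderEmbOfFin_mem T hc j
  have hfil : Finset.univ.filter (fun t : Fin (n + 1) => (t : ℕ) < q)
      = Finset.univ.image (Fin.castLE hq) := by
    ext x
    simp only [Finset.mem_filter, Finset.mem_univ, true_and, Finset.mem_image]
    constructor
    · intro hx
      exact ⟨⟨(x : ℕ), hx⟩, by ext; rfl⟩
    · rintro ⟨j, rfl⟩
      exact j.isLt
  rw [Wlow, wtT, hT, hfil,
    Finset.sum_image (fun a _ b _ hab => Fin.castLE_injective hq hab),
    Finset.sum_image (fun a _ b _ hab => f.injective hab)]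
  apply Finset.sum_le_sum
  intro j _
  have hle : Fin.castLE hq j ≤ f j := by
    rw [Fin.le_def]
    simpa using key j
  exact_mod_cast hmono hle

section ModulePart

variable {d}
variable {M : Type} [AddCommGroup M] [Module (MvPolynomial (Fin (n + 1)) k) M]
  [Module k M] {𝒜 : ℤ → Submodule k M} (Fr : GradedFreeRes k n d M 𝒜)

/-- `E p = F_p ⊗ K`, the level-`p` free module with Koszul-module coefficients. -/
abbrev E (p : ℕ) : Type := Fr.B p →₀ K k n

def slice (p : ℕ) (T : Finset (Fin (n + 1))) :
    E Fr p →ₗ[MvPolynomial (Fin (n + 1)) k] (Fr.B p →₀ MvPolynomial (Fin (n + 1)) k) :=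
  Finsupp.mapRange.linearMap (LinearMap.proj T)

def coT (p : ℕ) (T : Finset (Fin (n + 1))) :
    (Fr.B p →₀ MvPolynomial (Fin (n + 1)) k) →ₗ[MvPolynomial (Fin (n + 1)) k] E Fr p :=
  Finsupp.mapRange.linearMap (LinearMap.single (MvPolynomial (Fin (n + 1)) k)
    (fun _ : Finset (Fin (n + 1)) => MvPolynomial (Fin (n + 1)) k) T)

lemma slice_apply (p : ℕ) (T : Finset (Fin (n + 1))) (ζ : E Fr p) (b : Fr.B p) :
    slice Fr p T ζ b = ζ b T := by
  rw [slice, Finsupp.mapRange.linearMap_apply, Finsupp.mapRange_apply]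
  rfl

lemma coT_apply (p : ℕ) (T : Finset (Fin (n + 1))) (v : Fr.B p →₀ MvPolynomial (Fin (n + 1)) k)
    (b : Fr.B p) : coT Fr p T v b = Pi.single T (v b) := by
  rw [coT, Finsupp.mapRange.linearMap_apply, Finsupp.mapRange_apply]
  rfl

def Dbar (p : ℕ) : E Fr (p + 1) →ₗ[MvPolynomial (Fin (n + 1)) k] E Fr p :=
  ∑ T : Finset (Fin (n + 1)), (coT Fr p T) ∘ₗ (Fr.D p) ∘ₗ (slice Fr (p + 1) T)

lemma Dbar_apply (p : ℕ) (ζ : E Fr (p + 1)) (b : Fr.B p) (T : Finset (Fin (n + 1))) :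
    Dbar Fr p ζ b T = Fr.D p (slice Fr (p + 1) T ζ) b := by
  rw [Dbar, LinearMap.sum_apply, Finsupp.finset_sum_apply, Finset.sum_apply]
  have h1 : ∀ T' : Finset (Fin (n + 1)),
      ((coT Fr p T' ∘ₗ Fr.D p ∘ₗ slice Fr (p + 1) T') ζ) b T
        = if T = T' then Fr.D p (slice Fr (p + 1) T' ζ) b else 0 := by
    intro T'
    rw [LinearMap.comp_apply, LinearMap.comp_apply, coT_apply, Pi.single_apply]
  rw [Finset.sum_congr rfl (fun T' _ => h1 T'), Finset.sum_ite_eq, if_pos (Finset.mem_univ T)]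

lemma slice_Dbar (p : ℕ) (T : Finset (Fin (n + 1))) (ζ : E Fr (p + 1)) :
    slice Fr p T (Dbar Fr p ζ) = Fr.D p (slice Fr (p + 1) T ζ) := by
  apply Finsupp.ext; intro b
  rw [slice_apply, Dbar_apply]

lemma Dbar_Dbar (p : ℕ) (ζ : E Fr (p + 2)) : Dbar Fr p (Dbar Fr (p + 1) ζ) = 0 := by
  apply Finsupp.ext; intro b
  funext T
  rw [Dbar_apply, slice_Dbar, (Fr.exact_succ p).apply_apply_eq_zero (slice Fr (p + 2) T ζ)]
  simp

def kbar (p : ℕ) : E Fr p →ₗ[MvPolynomial (Fin (n + 1)) k] E Fr p :=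
  Finsupp.mapRange.linearMap kos

lemma kbar_apply (p : ℕ) (ζ : E Fr p) (b : Fr.B p) : kbar Fr p ζ b = kos (ζ b) := by
  rw [kbar, Finsupp.mapRange.linearMap_apply, Finsupp.mapRange_apply]

def sb (p : ℕ) (ζ : E Fr p) : E Fr p := Finsupp.mapRange hs hs_zero ζ

lemma sb_apply (p : ℕ) (ζ : E Fr p) (b : Fr.B p) : sb Fr p ζ b = hs (ζ b) :=
  Finsupp.mapRange_apply

lemma kbar_kbar (p : ℕ) (ζ : E Fr p) : kbar Fr p (kbar Fr p ζ) = 0 := by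
  apply Finsupp.ext; intro b
  rw [kbar_apply, kbar_apply, kos_kos]
  simp

lemma slice_kbar (p : ℕ) (T : Finset (Fin (n + 1))) (ζ : E Fr p) :
    slice Fr p T (kbar Fr p ζ)
      = ∑ t ∈ Tᶜ, ((sgn t T * X t : MvPolynomial (Fin (n + 1)) k) •
          slice Fr p (insert t T) ζ) := by
  apply Finsupp.ext; intro b
  rw [slice_apply, kbar_apply, kos_apply, Finsupp.finset_sum_apply]
  exact Finset.sum_congr rfl fun t _ => by
    rw [Finsupp.smul_apply, slice_apply, smul_eq_mul, mul_assoc]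

lemma Dbar_kbar (p : ℕ) (ζ : E Fr (p + 1)) :
    Dbar Fr p (kbar Fr (p + 1) ζ) = kbar Fr p (Dbar Fr p ζ) := by
  apply Finsupp.ext; intro b
  funext T
  rw [Dbar_apply, kbar_apply, kos_apply, slice_kbar, map_sum, Finsupp.finset_sum_apply]
  refine Finset.sum_congr rfl fun t _ => ?_
  rw [map_smul, Finsupp.smul_apply, smul_eq_mul, Dbar_apply, mul_assoc]

lemma homotopyE (p : ℕ) (ξ : E Fr p) (hπ : ∀ b, pr0 (ξ b) = 0) :
    kbar Fr p (sb Fr p ξ) + sb Fr p (kbar Fr p ξ) = ξ := by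
  apply Finsupp.ext; intro b
  rw [Finsupp.add_apply, kbar_apply, sb_apply, sb_apply, kbar_apply]
  have h := homotopy (ξ b)
  rwa [hπ b, add_zero] at h

lemma D_apply_sum (p : ℕ) (v : Fr.B (p + 1) →₀ MvPolynomial (Fin (n + 1)) k) :
    Fr.D p v = v.sum fun b c => c • Fr.D p (Finsupp.single b 1) := by
  conv_lhs => rw [← Finsupp.sum_single v]
  rw [map_finsuppSum]
  apply Finsupp.sum_congr
  intro b _
  rw [show (Finsupp.single b (v b) : Fr.B (p + 1) →₀ MvPolynomial (Fin (n + 1)) k)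
      = v b • Finsupp.single b 1 from by rw [Finsupp.smul_single', mul_one], map_smul]

lemma constD (p : ℕ) (v : Fr.B (p + 1) →₀ MvPolynomial (Fin (n + 1)) k) (b' : Fr.B p) :
    constantCoeff (Fr.D p v b') = 0 := by
  rw [D_apply_sum, Finsupp.sum_apply, map_finsuppSum, Finsupp.sum]
  apply Finset.sum_eq_zero
  intro b _
  rw [Finsupp.smul_apply, smul_eq_mul, map_mul, Fr.minimal p b b', mul_zero]

lemma pr0_Dbar (p : ℕ) (ζ : E Fr (p + 1)) (b : Fr.B p) : pr0 (Dbar Fr p ζ b) = 0 := by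
  funext T
  rw [pr0]
  split_ifs with h
  · rw [Dbar_apply, constD, map_zero, Pi.zero_apply]
  · rw [Pi.zero_apply]

lemma lift_succ (p : ℕ) (ζ : E Fr (p + 1)) (hζ : Dbar Fr p ζ = 0) :
    ∃ η : E Fr (p + 2), Dbar Fr (p + 1) η = ζ := by
  have hT : ∀ T, ∃ v, Fr.D (p + 1) v = slice Fr (p + 1) T ζ := by
    intro T
    have h0 : Fr.D p (slice Fr (p + 1) T ζ) = 0 := by
      rw [← slice_Dbar, hζ, map_zero]
    exact (Fr.exact_succ p _).mp h0
  choose v hv using hT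
  refine ⟨∑ T, coT Fr (p + 2) T (v T), ?_⟩
  apply Finsupp.ext; intro b
  funext T
  rw [Dbar_apply]
  have hsl : slice Fr (p + 2) T (∑ T', coT Fr (p + 2) T' (v T')) = v T := by
    rw [map_sum]
    have h1 : ∀ T' : Finset (Fin (n + 1)), slice Fr (p + 2) T (coT Fr (p + 2) T' (v T'))
        = if T = T' then v T' else 0 := by
      intro T'
      apply Finsupp.ext; intro b'
      rw [slice_apply, coT_apply, Pi.single_apply, apply_ite (fun (w : Fr.B (p + 2) →₀
        MvPolynomial (Fin (n + 1)) k) => w b')]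
      simp
    rw [Finset.sum_congr rfl (fun T' _ => h1 T'), Finset.sum_ite_eq,
      if_pos (Finset.mem_univ T)]
  rw [hsl, hv T, slice_apply]

lemma lift_zero (ζ : E Fr 0) (haug : ∀ T, Fr.aug (slice Fr 0 T ζ) = 0) :
    ∃ η : E Fr 1, Dbar Fr 0 η = ζ := by
  have hT : ∀ T, ∃ v, Fr.D 0 v = slice Fr 0 T ζ := by
    intro T
    exact (Fr.exact_zero _).mp (haug T)
  choose v hv using hT
  refine ⟨∑ T, coT Fr 1 T (v T), ?_⟩
  apply Finsupp.ext; intro b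
  funext T
  rw [Dbar_apply]
  have hsl : slice Fr 1 T (∑ T', coT Fr 1 T' (v T')) = v T := by
    rw [map_sum]
    have h1 : ∀ T' : Finset (Fin (n + 1)), slice Fr 1 T (coT Fr 1 T' (v T'))
        = if T = T' then v T' else 0 := by
      intro T'
      apply Finsupp.ext; intro b'
      rw [slice_apply, coT_apply, Pi.single_apply, apply_ite (fun (w : Fr.B 1 →₀
        MvPolynomial (Fin (n + 1)) k) => w b')]
      simp
    rw [Finset.sum_congr rfl (fun T' _ => h1 T'), Finset.sum_ite_eq,
      if_pos (Finset.mem_univ T)]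
  rw [hsl, hv T, slice_apply]

/-- internal-degree homogeneity of degree `e` -/
def HomogE (p : ℕ) (e : ℤ) (ζ : E Fr p) : Prop :=
  ∀ b, KHomog d (e - Fr.deg p b) (ζ b)

/-- concentrated in exterior degree `q` -/
def SlotsE (p q : ℕ) (ζ : E Fr p) : Prop := ∀ b, KSlots q (ζ b)

lemma D_homog_vec (p : ℕ) (f : ℤ) (v : Fr.B (p + 1) →₀ MvPolynomial (Fin (n + 1)) k)
    (hv : ∀ b, v b ∈ weightedHomogeneousSubmodule k (fun t => (d t : ℤ)) (f - Fr.deg (p + 1) b))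
    (b' : Fr.B p) :
    Fr.D p v b' ∈ weightedHomogeneousSubmodule k (fun t => (d t : ℤ)) (f - Fr.deg p b') := by
  rw [D_apply_sum, Finsupp.sum_apply, Finsupp.sum]
  apply Submodule.sum_mem
  intro b _
  rw [Finsupp.smul_apply, smul_eq_mul, mem_weightedHomogeneousSubmodule]
  have h1 := (mem_weightedHomogeneousSubmodule _ _ _ _).mp (hv b)
  have h2 := (mem_weightedHomogeneousSubmodule _ _ _ _).mp (Fr.homog p b b')
  have h3 := h1.mul h2
  rwa [show (f - Fr.deg (p + 1) b) + (Fr.deg (p + 1) b - Fr.deg p b') = f - Fr.deg p b'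
    from by ring] at h3

lemma Dbar_homogE (p : ℕ) (e : ℤ) {ζ : E Fr (p + 1)} (h : HomogE Fr (p + 1) e ζ) :
    HomogE Fr p e (Dbar Fr p ζ) := by
  intro b' T
  rw [Dbar_apply, show e - Fr.deg p b' - wtT d T = (e - wtT d T) - Fr.deg p b' from by ring]
  apply D_homog_vec
  intro b
  rw [slice_apply, show (e - wtT d T) - Fr.deg (p + 1) b
    = e - Fr.deg (p + 1) b - wtT d T from by ring]
  exact h b T

lemma sb_homogE (p : ℕ) (e : ℤ) {ζ : E Fr p} (h : HomogE Fr p e ζ) :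
    HomogE Fr p e (sb Fr p ζ) := by
  intro b
  rw [show sb Fr p ζ b = hs (ζ b) from sb_apply Fr p ζ b]
  exact hs_homog d (h b)

lemma Dbar_slotsE (p q : ℕ) {ζ : E Fr (p + 1)} (h : SlotsE Fr (p + 1) q ζ) :
    SlotsE Fr p q (Dbar Fr p ζ) := by
  intro b' T hT
  have h0 : slice Fr (p + 1) T ζ = 0 := by
    apply Finsupp.ext; intro b
    rw [slice_apply]
    exact h b T hT
  rw [Dbar_apply, h0, map_zero]
  rfl

lemma sb_slotsE (p q : ℕ) {ζ : E Fr p} (h : SlotsE Fr p q ζ) :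
    SlotsE Fr p (q + 1) (sb Fr p ζ) := by
  intro b
  rw [show sb Fr p ζ b = hs (ζ b) from sb_apply Fr p ζ b]
  exact hs_slots (h b)

end ModulePart

section GradePart

variable {d}
variable {M : Type} [AddCommGroup M] [Module (MvPolynomial (Fin (n + 1)) k) M]
  [Module k M] [IsScalarTower k (MvPolynomial (Fin (n + 1)) k) M]
  {𝒜 : ℤ → Submodule k M}

lemma monomial_one_smul_mem
    (hgr : ∀ (t : Fin (n + 1)) (e : ℤ), ∀ m ∈ 𝒜 e,
      (X t : MvPolynomial (Fin (n + 1)) k) • m ∈ 𝒜 (e + d t))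
    (N : ℕ) : ∀ ν : Fin (n + 1) →₀ ℕ, (∑ t, ν t) = N → ∀ (e : ℤ) (m : M), m ∈ 𝒜 e →
      (monomial ν (1 : k)) • m ∈ 𝒜 (e + Finsupp.weight (fun t => (d t : ℤ)) ν) := by
  induction N with
  | zero =>
    intro ν hν e m hm
    have hν0 : ν = 0 := by
      ext t
      simpa using Finset.sum_eq_zero_iff.mp hν t (Finset.mem_univ t)
    subst hν0
    rw [map_zero, add_zero]
    have h1 : (monomial (0 : Fin (n + 1) →₀ ℕ) (1 : k)) = 1 := by
      rw [monomial_zero', C_1]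
    rw [h1, one_smul]
    exact hm
  | succ N ih =>
    intro ν hν e m hm
    have hex : ∃ t, ν t ≠ 0 := by
      by_contra h
      push_neg at h
      rw [Finset.sum_congr rfl (fun t _ => h t), Finset.sum_const_zero] at hν
      exact Nat.succ_ne_zero N hν.symm
    obtain ⟨t, ht⟩ := hex
    have hle : Finsupp.single t 1 ≤ ν :=
      Finsupp.single_le_iff.mpr (Nat.one_le_iff_ne_zero.mpr ht)
    set ν' : Fin (n + 1) →₀ ℕ := ν - Finsupp.single t 1 with hν'
    have hrec : ν' + Finsupp.single t 1 = ν := tsub_add_cancel_of_le hle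
    have hsum : (∑ s, ν' s) = N := by
      have h1 : (∑ s, ν s)
          = (∑ s, ν' s) + (∑ s, (Finsupp.single t 1 : Fin (n + 1) →₀ ℕ) s) := by
        rw [← Finset.sum_add_distrib]
        exact Finset.sum_congr rfl fun s _ => by
          conv_lhs => rw [← hrec]
          rfl
      have h2 : (∑ s, (Finsupp.single t 1 : Fin (n + 1) →₀ ℕ) s) = 1 := by
        simp [Finsupp.single_apply]
      omega
    have hmon : (monomial ν (1 : k)) = X t * monomial ν' 1 := by
      rw [X_mul_monomial', hrec]
    rw [hmon, mul_smul]
    have h3 := ih ν' hsum e m hm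
    have h4 := hgr t _ _ h3
    have heq : e + Finsupp.weight (fun t => (d t : ℤ)) ν' + (d t : ℤ)
        = e + Finsupp.weight (fun t => (d t : ℤ)) ν := by
      have h5 := congrArg (Finsupp.weight (fun t => (d t : ℤ))) hrec
      rw [map_add, weight_single] at h5
      omega
    rwa [heq] at h4

lemma grade_smul
    (hgr : ∀ (t : Fin (n + 1)) (e : ℤ), ∀ m ∈ 𝒜 e,
      (X t : MvPolynomial (Fin (n + 1)) k) • m ∈ 𝒜 (e + d t))
    {p : MvPolynomial (Fin (n + 1)) k} {δ : ℤ}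
    (hp : p ∈ weightedHomogeneousSubmodule k (fun t => (d t : ℤ)) δ) {e : ℤ} {m : M}
    (hm : m ∈ 𝒜 e) : p • m ∈ 𝒜 (δ + e) := by
  rw [show p • m = ∑ ν ∈ p.support, (monomial ν (coeff ν p)) • m from by
    rw [← Finset.sum_smul, ← p.as_sum]]
  apply Submodule.sum_mem
  intro ν hν
  have hw : Finsupp.weight (fun t => (d t : ℤ)) ν = δ :=
    (mem_weightedHomogeneousSubmodule _ _ _ _).mp hp (MvPolynomial.mem_support_iff.mp hν)
  have h1 : (monomial ν (coeff ν p)) = C (coeff ν p) * monomial ν (1 : k) := by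
    rw [C_mul_monomial, mul_one]
  have h2 : (C (coeff ν p) : MvPolynomial (Fin (n + 1)) k) • ((monomial ν (1 : k)) • m)
      = coeff ν p • ((monomial ν (1 : k)) • m) := by
    rw [← MvPolynomial.algebraMap_eq]
    exact algebraMap_smul _ _ _
  rw [h1, mul_smul, h2]
  apply Submodule.smul_mem
  have h3 := monomial_one_smul_mem hgr (∑ t, ν t) ν rfl e m hm
  rwa [hw, add_comm] at h3

variable (Fr : GradedFreeRes k n d M 𝒜)

lemma aug_homog_vec
    (hgr : ∀ (t : Fin (n + 1)) (e : ℤ), ∀ m ∈ 𝒜 e,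
      (X t : MvPolynomial (Fin (n + 1)) k) • m ∈ 𝒜 (e + d t))
    (f : ℤ) (v : Fr.B 0 →₀ MvPolynomial (Fin (n + 1)) k)
    (hv : ∀ b, v b ∈ weightedHomogeneousSubmodule k (fun t => (d t : ℤ)) (f - Fr.deg 0 b)) :
    Fr.aug v ∈ 𝒜 f := by
  have hA : Fr.aug v = v.sum fun b c => c • Fr.aug (Finsupp.single b 1) := by
    conv_lhs => rw [← Finsupp.sum_single v]
    rw [map_finsuppSum]
    apply Finsupp.sum_congr
    intro b _
    rw [show (Finsupp.single b (v b) : Fr.B 0 →₀ MvPolynomial (Fin (n + 1)) k)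
        = v b • Finsupp.single b 1 from by rw [Finsupp.smul_single', mul_one], map_smul]
  rw [hA, Finsupp.sum]
  apply Submodule.sum_mem
  intro b _
  have h1 := grade_smul hgr (hv b) (Fr.aug_hom b)
  rwa [sub_add_cancel] at h1

/-- the inductive side condition: `ζ` is a `κ`-cycle after applying `D` -/
def Cond : ∀ p, E Fr p → Prop
  | 0, _ => True
  | (p + 1), ζ => kbar Fr p (Dbar Fr p ζ) = 0

lemma cond_of_kbar (p : ℕ) (ζ : E Fr p) (h : kbar Fr p ζ = 0) : Cond Fr p ζ := by
  cases p with
  | zero => trivial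
  | succ p' =>
    show kbar Fr p' (Dbar Fr p' ζ) = 0
    rw [← Dbar_kbar, h, map_zero]

lemma crux (hmono : Monotone d)
    (hgr : ∀ (t : Fin (n + 1)) (e : ℤ), ∀ m ∈ 𝒜 e,
      (X t : MvPolynomial (Fin (n + 1)) k) • m ∈ 𝒜 (e + d t))
    (hneg : ∀ e : ℤ, e < 0 → 𝒜 e = ⊥) :
    ∀ (p q : ℕ) (e : ℤ) (ζ : E Fr p), HomogE Fr p e ζ → SlotsE Fr p q ζ →
      e < Wlow d (p + q) → Cond Fr p ζ →
      ∃ (α : E Fr p) (β : E Fr (p + 1)), ζ = kbar Fr p α + Dbar Fr p β := by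
  intro p
  induction p with
  | zero =>
    intro q e ζ hhom hslot hlt _
    have haug : ∀ T, Fr.aug (slice Fr 0 T ζ) = 0 := by
      intro T
      by_cases hc : T.card = q
      · have hmem : Fr.aug (slice Fr 0 T ζ) ∈ 𝒜 (e - wtT d T) := by
          apply aug_homog_vec Fr hgr
          intro b
          rw [slice_apply, show (e - wtT d T) - Fr.deg 0 b
            = e - Fr.deg 0 b - wtT d T from by ring]
          exact hhom b T
        have hlt2 : e - wtT d T < 0 := by
          have h1 := Wlow_le_wtT d hmono hc
          have h2 : Wlow d (0 + q) = Wlow d q := by rw [Nat.zero_add]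
          omega
        rw [hneg _ hlt2] at hmem
        exact (Submodule.mem_bot k).mp hmem
      · have h0 : slice Fr 0 T ζ = 0 := by
          apply Finsupp.ext; intro b
          rw [slice_apply]
          exact hslot b T hc
        rw [h0, map_zero]
    obtain ⟨η, hη⟩ := lift_zero Fr ζ haug
    exact ⟨0, η, by rw [map_zero, zero_add, hη]⟩
  | succ p ih =>
    intro q e ζ hhom hslot hlt hcond
    have hcond' : kbar Fr p (Dbar Fr p ζ) = 0 := hcond
    have h1 : kbar Fr p (sb Fr p (Dbar Fr p ζ)) = Dbar Fr p ζ := by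
      have hh := homotopyE Fr p (Dbar Fr p ζ) (pr0_Dbar Fr p ζ)
      rw [hcond'] at hh
      have hsb0 : sb Fr p (0 : E Fr p) = 0 := by
        apply Finsupp.ext; intro b
        simp [sb_apply, hs_zero]
      rwa [hsb0, add_zero] at hh
    have hhom' : HomogE Fr p e (sb Fr p (Dbar Fr p ζ)) :=
      sb_homogE Fr p e (Dbar_homogE Fr p e hhom)
    have hslot' : SlotsE Fr p (q + 1) (sb Fr p (Dbar Fr p ζ)) :=
      sb_slotsE Fr p q (Dbar_slotsE Fr p q hslot)
    have hlt' : e < Wlow d (p + (q + 1)) := by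
      rwa [show p + (q + 1) = p + 1 + q from by omega]
    have hcond2 : Cond Fr p (sb Fr p (Dbar Fr p ζ)) := by
      cases p with
      | zero => trivial
      | succ p' =>
        show kbar Fr p' (Dbar Fr p' (sb Fr (p' + 1) (Dbar Fr (p' + 1) ζ))) = 0
        rw [← Dbar_kbar, h1, Dbar_Dbar]
    obtain ⟨α', β', hdec⟩ := ih (q + 1) e (sb Fr p (Dbar Fr p ζ)) hhom' hslot' hlt' hcond2
    have h2 : Dbar Fr p (ζ - kbar Fr (p + 1) β') = 0 := by
      rw [map_sub, Dbar_kbar, ← h1, hdec, map_add, kbar_kbar, zero_add]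
      exact sub_self _
    obtain ⟨γ, hγ⟩ := lift_succ Fr p (ζ - kbar Fr (p + 1) β') h2
    exact ⟨β', γ, by rw [hγ]; abel⟩

end GradePart

end

end Stmt1Aux

/-!
STATEMENT 1: `S = k[x_0,...,x_n]` with `deg x_t = d t`, `d 0 ≤ ... ≤ d n` positive;
`M` a finitely generated graded `S`-module with `M_0 ≠ 0` and `M_e = 0` for `e < 0`.
If the graded Betti number `β_{i,j}(M)` is nonzero (i.e. the minimal free resolution
of `M` has a generator of degree `j` in homological degree `i`), then
`j ≥ w_i = d 0 + ... + d (i-1)`, the sum of the `i` smallest weights.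
-/

open Stmt1Aux in
theorem stmt_1 (k : Type) [Field k] (n : ℕ) (d : Fin (n + 1) → ℕ)
    (hmono : Monotone d) (hpos : ∀ t, 0 < d t)
    (M : Type) [AddCommGroup M] [Module (MvPolynomial (Fin (n + 1)) k) M]
    [Module k M] [IsScalarTower k (MvPolynomial (Fin (n + 1)) k) M]
    (𝒜 : ℤ → Submodule k M)
    (hdec : DirectSum.IsInternal 𝒜)
    (hgr : ∀ (t : Fin (n + 1)) (e : ℤ), ∀ m ∈ 𝒜 e,
      (X t : MvPolynomial (Fin (n + 1)) k) • m ∈ 𝒜 (e + d t))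
    (hfg : Module.Finite (MvPolynomial (Fin (n + 1)) k) M)
    (hneg : ∀ e : ℤ, e < 0 → 𝒜 e = ⊥) (h0 : 𝒜 0 ≠ ⊥)
    (Fr : GradedFreeRes k n d M 𝒜)
    (i : ℕ) (j : ℤ) (hβ : ∃ b : Fr.B i, Fr.deg i b = j) :
    (∑ t ∈ Finset.univ.filter (fun t : Fin (n + 1) => (t : ℕ) < i), (d t : ℤ)) ≤ j := by
  classical
  by_contra hcon
  push_neg at hcon
  obtain ⟨b₀, hb₀⟩ := hβ
  have hcon' : j < Wlow d i := hcon
  set ζ : E Fr i := coT Fr i ∅ (Finsupp.single b₀ 1) with hζ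
  have hζval : ∀ b, ζ b = (Pi.single (∅ : Finset (Fin (n + 1)))
      ((Finsupp.single b₀ (1 : MvPolynomial (Fin (n + 1)) k)) b) : K k n) :=
    fun b => coT_apply Fr i ∅ _ b
  have hhom : HomogE Fr i j ζ := by
    intro b T
    rw [hζval b, Pi.single_apply]
    by_cases hT : T = ∅
    · rw [if_pos hT]
      by_cases hb : b₀ = b
      · subst hb
        rw [Finsupp.single_eq_same]
        rw [show j - Fr.deg i b₀ - wtT d T = 0 from by
          rw [hT, hb₀, show wtT d ∅ = 0 from Finset.sum_empty]; ring]
        exact (mem_weightedHomogeneousSubmodule _ _ _ _).mpr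
          (isWeightedHomogeneous_one k _)
      · rw [Finsupp.single_eq_of_ne' hb]
        exact Submodule.zero_mem _
    · rw [if_neg hT]
      exact Submodule.zero_mem _
  have hslot : SlotsE Fr i 0 ζ := by
    intro b T hT
    rw [hζval b, Pi.single_apply, if_neg (fun h => hT (by rw [h, Finset.card_empty]))]
  have hlt : j < Wlow d (i + 0) := by rwa [Nat.add_zero]
  have hcond : Cond Fr i ζ := by
    apply cond_of_kbar
    apply Finsupp.ext; intro b
    have h0' : kos (ζ b) = 0 := by
      apply kos_slots_empty
      intro T hT
      rw [hζval b, Pi.single_apply, if_neg hT]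
    rw [kbar_apply, h0']
    simp
  obtain ⟨α, β, hdecomp⟩ := crux Fr hmono hgr hneg i 0 j ζ hhom hslot hlt hcond
  have heval := congrArg (fun w : E Fr i => constantCoeff (w b₀ ∅)) hdecomp
  have hL : constantCoeff (ζ b₀ ∅) = 1 := by
    rw [hζval b₀, Pi.single_eq_same, Finsupp.single_eq_same, map_one]
  have hR1 : constantCoeff (kbar Fr i α b₀ ∅) = 0 := by
    rw [kbar_apply, kos_apply, map_sum]
    apply Finset.sum_eq_zero
    intro t _
    rw [map_mul, map_mul, constantCoeff_X, zero_mul, mul_zero]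
  have hR2 : constantCoeff (Dbar Fr i β b₀ ∅) = 0 := by
    rw [Dbar_apply, constD]
  rw [hL, Finsupp.add_apply, Pi.add_apply, map_add, hR1, hR2, add_zero] at heval
  exact one_ne_zero heval
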